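/- 1 minus the Jaccard similarity is a metric on finite subsets of a fixed ground set: d(A,B) = 1 − |A∩B|/|A∪B| (with d(∅,∅)=0) satisfies nonnegativity, symmetry, identity of indiscernibles, and the triangle inequality. -/

import Mathlib

set_option maxRecDepth 4000


noncomputable def jaccardDist {α : Type*} [DecidableEq α] (A B : Finset α) : ℝ :=
  if A ∪ B = ∅ then 0 else 1 - (A ∩ B).card / (A ∪ B).card

lemma jaccardDist_nonneg {α : Type*} [DecidableEq α] (A B : Finset α) :
    0 ≤ jaccardDist A B := by
  unfold jaccardDist
  split_ifs with h
  · exact le_refl 0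
  · have hpos : (0:ℝ) < (A ∪ B).card := by
      exact_mod_cast Finset.card_pos.mpr (Finset.nonempty_iff_ne_empty.mpr h)
    have hle : ((A ∩ B).card : ℝ) ≤ ((A ∪ B).card : ℝ) := by
      exact_mod_cast Finset.card_le_card (Finset.inter_subset_union)
    have : ((A ∩ B).card : ℝ) / ((A ∪ B).card : ℝ) ≤ 1 := by
      rw [div_le_one hpos]; exact hle
    linarith

theorem jaccard_dist_is_metric {α : Type*} [DecidableEq α] [Fintype α]
    (A B C : Finset α) :
    0 ≤ jaccardDist A B ∧
    jaccardDist A B = jaccardDist B A ∧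
    (jaccardDist A B = 0 ↔ A = B) ∧
    jaccardDist A C ≤ jaccardDist A B + jaccardDist B C := by
  refine ⟨jaccardDist_nonneg A B, ?_, ?_, ?_⟩
  · unfold jaccardDist
    rw [Finset.union_comm, Finset.inter_comm]
  · unfold jaccardDist
    split_ifs with h
    · rw [Finset.union_eq_empty] at h
      simp [h.1, h.2]
    · have hpos : (0:ℝ) < (A ∪ B).card := by
        exact_mod_cast Finset.card_pos.mpr (Finset.nonempty_iff_ne_empty.mpr h)
      constructor
      · intro h0
        have : ((A ∩ B).card : ℝ) = ((A ∪ B).card : ℝ) := by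
          field_simp at h0
          linarith
        have hcard : (A ∪ B).card ≤ (A ∩ B).card := by exact_mod_cast this.ge
        have heq : A ∩ B = A ∪ B :=
          Finset.eq_of_subset_of_card_le Finset.inter_subset_union hcard
        have hAB : A ⊆ B := fun x hx => by
          have : x ∈ A ∩ B := heq.ge (Finset.mem_union_left B hx)
          exact (Finset.mem_inter.mp this).2
        have hBA : B ⊆ A := fun x hx => by
          have : x ∈ A ∩ B := heq.ge (Finset.mem_union_right A hx)
          exact (Finset.mem_inter.mp this).1
        exact Finset.Subset.antisymm hAB hBA
      · rintro rfl
        rw [Finset.union_self] at hpos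
        rw [Finset.inter_self, Finset.union_self]
        field_simp
        norm_num
  · by_cases hAB : A ∪ B = ∅
    · rw [Finset.union_eq_empty] at hAB
      obtain ⟨rfl, rfl⟩ := hAB
      have hd : jaccardDist (∅ : Finset α) (∅ : Finset α) = 0 := by
        unfold jaccardDist; simp
      rw [hd, zero_add]
    by_cases hBC : B ∪ C = ∅
    · rw [Finset.union_eq_empty] at hBC
      obtain ⟨rfl, rfl⟩ := hBC
      have h1 : jaccardDist (∅ : Finset α) (∅ : Finset α) = 0 := by
        unfold jaccardDist; simp
      rw [h1, add_zero]
    by_cases hAC : A ∪ C = ∅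
    · rw [Finset.union_eq_empty] at hAC
      obtain ⟨rfl, rfl⟩ := hAC
      have h1 : jaccardDist (∅ : Finset α) (∅ : Finset α) = 0 := by
        unfold jaccardDist; simp
      rw [h1]
      exact add_nonneg (jaccardDist_nonneg _ _) (jaccardDist_nonneg _ _)
    -- main case
    have hp : (0:ℝ) < ((A ∪ C).card : ℝ) := by
      exact_mod_cast Finset.card_pos.mpr (Finset.nonempty_iff_ne_empty.mpr hAC)
    have hq : (0:ℝ) < ((A ∪ B).card : ℝ) := by
      exact_mod_cast Finset.card_pos.mpr (Finset.nonempty_iff_ne_empty.mpr hAB)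
    have hr : (0:ℝ) < ((B ∪ C).card : ℝ) := by
      exact_mod_cast Finset.card_pos.mpr (Finset.nonempty_iff_ne_empty.mpr hBC)
    -- rewrite jaccard distances as single fractions
    have e1 : jaccardDist A C = (((A ∪ C).card : ℝ) - ((A ∩ C).card : ℝ)) / ((A ∪ C).card : ℝ) := by
      unfold jaccardDist
      rw [if_neg hAC, eq_div_iff hp.ne']
      ring_nf
      field_simp
    have e2 : jaccardDist A B = (((A ∪ B).card : ℝ) - ((A ∩ B).card : ℝ)) / ((A ∪ B).card : ℝ) := by
      unfold jaccardDist
      rw [if_neg hAB, eq_div_iff hq.ne']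
      ring_nf
      field_simp
    have e3 : jaccardDist B C = (((B ∪ C).card : ℝ) - ((B ∩ C).card : ℝ)) / ((B ∪ C).card : ℝ) := by
      unfold jaccardDist
      rw [if_neg hBC, eq_div_iff hr.ne']
      ring_nf
      field_simp
    -- union cards via inclusion-exclusion
    have hU1 : ((A ∪ B).card : ℝ) = (A.card : ℝ) + (B.card : ℝ) - ((A ∩ B).card : ℝ) := by
      have h := Finset.card_union_add_card_inter A B
      have h' : ((A ∪ B).card : ℝ) + ((A ∩ B).card : ℝ) = (A.card : ℝ) + (B.card : ℝ) := by
        exact_mod_cast h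
      linarith
    have hU2 : ((B ∪ C).card : ℝ) = (B.card : ℝ) + (C.card : ℝ) - ((B ∩ C).card : ℝ) := by
      have h := Finset.card_union_add_card_inter B C
      have h' : ((B ∪ C).card : ℝ) + ((B ∩ C).card : ℝ) = (B.card : ℝ) + (C.card : ℝ) := by
        exact_mod_cast h
      linarith
    have hU3 : ((A ∪ C).card : ℝ) = (A.card : ℝ) + (C.card : ℝ) - ((A ∩ C).card : ℝ) := by
      have h := Finset.card_union_add_card_inter A C
      have h' : ((A ∪ C).card : ℝ) + ((A ∩ C).card : ℝ) = (A.card : ℝ) + (C.card : ℝ) := by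
        exact_mod_cast h
      linarith
    -- corner inequalities
    have h1 : (0:ℝ) ≤ (A.card : ℝ) - ((A ∩ B).card : ℝ) - ((A ∩ C).card : ℝ) + ((A ∩ B ∩ C).card : ℝ) := by
      have hie := Finset.card_union_add_card_inter (A ∩ B) (A ∩ C)
      have hint : (A ∩ B) ∩ (A ∩ C) = A ∩ B ∩ C := by
        ext x; simp only [Finset.mem_inter]; tauto
      rw [hint] at hie
      have hsub : (A ∩ B) ∪ (A ∩ C) ⊆ A := by
        intro x hx
        rcases Finset.mem_union.mp hx with h | h
        · exact (Finset.mem_inter.mp h).1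
        · exact (Finset.mem_inter.mp h).1
      have hieR : ((((A ∩ B) ∪ (A ∩ C)).card : ℝ)) + ((A ∩ B ∩ C).card : ℝ)
          = ((A ∩ B).card : ℝ) + ((A ∩ C).card : ℝ) := by exact_mod_cast hie
      have hleR : ((((A ∩ B) ∪ (A ∩ C)).card : ℝ)) ≤ (A.card : ℝ) := by
        exact_mod_cast Finset.card_le_card hsub
      linarith
    have h2 : (0:ℝ) ≤ (B.card : ℝ) - ((A ∩ B).card : ℝ) - ((B ∩ C).card : ℝ) + ((A ∩ B ∩ C).card : ℝ) := by
      have hie := Finset.card_union_add_card_inter (A ∩ B) (B ∩ C)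
      have hint : (A ∩ B) ∩ (B ∩ C) = A ∩ B ∩ C := by
        ext x; simp only [Finset.mem_inter]; tauto
      rw [hint] at hie
      have hsub : (A ∩ B) ∪ (B ∩ C) ⊆ B := by
        intro x hx
        rcases Finset.mem_union.mp hx with h | h
        · exact (Finset.mem_inter.mp h).2
        · exact (Finset.mem_inter.mp h).1
      have hieR : ((((A ∩ B) ∪ (B ∩ C)).card : ℝ)) + ((A ∩ B ∩ C).card : ℝ)
          = ((A ∩ B).card : ℝ) + ((B ∩ C).card : ℝ) := by exact_mod_cast hie
      have hleR : ((((A ∩ B) ∪ (B ∩ C)).card : ℝ)) ≤ (B.card : ℝ) := by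
        exact_mod_cast Finset.card_le_card hsub
      linarith
    have h3 : (0:ℝ) ≤ (C.card : ℝ) - ((A ∩ C).card : ℝ) - ((B ∩ C).card : ℝ) + ((A ∩ B ∩ C).card : ℝ) := by
      have hie := Finset.card_union_add_card_inter (A ∩ C) (B ∩ C)
      have hint : (A ∩ C) ∩ (B ∩ C) = A ∩ B ∩ C := by
        ext x; simp only [Finset.mem_inter]; tauto
      rw [hint] at hie
      have hsub : (A ∩ C) ∪ (B ∩ C) ⊆ C := by
        intro x hx
        rcases Finset.mem_union.mp hx with h | h
        · exact (Finset.mem_inter.mp h).2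
        · exact (Finset.mem_inter.mp h).2
      have hieR : ((((A ∩ C) ∪ (B ∩ C)).card : ℝ)) + ((A ∩ B ∩ C).card : ℝ)
          = ((A ∩ C).card : ℝ) + ((B ∩ C).card : ℝ) := by exact_mod_cast hie
      have hleR : ((((A ∩ C) ∪ (B ∩ C)).card : ℝ)) ≤ (C.card : ℝ) := by
        exact_mod_cast Finset.card_le_card hsub
      linarith
    have h4 : (0:ℝ) ≤ ((A ∩ B).card : ℝ) - ((A ∩ B ∩ C).card : ℝ) := by
      have hs : A ∩ B ∩ C ⊆ A ∩ B := Finset.inter_subset_left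
      have := Finset.card_le_card hs
      exact sub_nonneg.mpr (by exact_mod_cast this)
    have h5 : (0:ℝ) ≤ ((A ∩ C).card : ℝ) - ((A ∩ B ∩ C).card : ℝ) := by
      have hs : A ∩ B ∩ C ⊆ A ∩ C := by
        intro x hx
        simp only [Finset.mem_inter] at hx ⊢
        exact ⟨hx.1.1, hx.2⟩
      have := Finset.card_le_card hs
      exact sub_nonneg.mpr (by exact_mod_cast this)
    have h6 : (0:ℝ) ≤ ((B ∩ C).card : ℝ) - ((A ∩ B ∩ C).card : ℝ) := by
      have hs : A ∩ B ∩ C ⊆ B ∩ C := by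
        intro x hx
        simp only [Finset.mem_inter] at hx ⊢
        exact ⟨hx.1.2, hx.2⟩
      have := Finset.card_le_card hs
      exact sub_nonneg.mpr (by exact_mod_cast this)
    have h7 : (0:ℝ) ≤ ((A ∩ B ∩ C).card : ℝ) := by positivity
    rw [e1, e2, e3]
    rw [div_add_div _ _ hq.ne' hr.ne', div_le_div_iff₀ hp (by positivity)]
    rw [hU1, hU2, hU3] at *
    linarith [mul_nonneg (mul_nonneg h5 h7) h7,
      mul_nonneg (mul_nonneg h5 h6) h7,
      mul_nonneg (mul_nonneg h5 h6) h6,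
      mul_nonneg (mul_nonneg h5 h5) h7,
      mul_nonneg (mul_nonneg h5 h5) h6,
      mul_nonneg (mul_nonneg h5 h5) h5,
      mul_nonneg (mul_nonneg h4 h5) h7,
      mul_nonneg (mul_nonneg h4 h5) h6,
      mul_nonneg (mul_nonneg h4 h5) h5,
      mul_nonneg (mul_nonneg h4 h4) h5,
      mul_nonneg (mul_nonneg h3 h6) h7,
      mul_nonneg (mul_nonneg h3 h6) h6,
      mul_nonneg (mul_nonneg h3 h5) h7,
      mul_nonneg (mul_nonneg h3 h5) h6,
      mul_nonneg (mul_nonneg h3 h5) h5,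
      mul_nonneg (mul_nonneg h3 h4) h6,
      mul_nonneg (mul_nonneg h3 h4) h5,
      mul_nonneg (mul_nonneg h3 h3) h6,
      mul_nonneg (mul_nonneg h3 h3) h5,
      mul_nonneg (mul_nonneg h2 h7) h7,
      mul_nonneg (mul_nonneg h2 h6) h7,
      mul_nonneg (mul_nonneg h2 h6) h6,
      mul_nonneg (mul_nonneg h2 h5) h7,
      mul_nonneg (mul_nonneg h2 h5) h6,
      mul_nonneg (mul_nonneg h2 h5) h5,
      mul_nonneg (mul_nonneg h2 h4) h7,
      mul_nonneg (mul_nonneg h2 h4) h6,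
      mul_nonneg (mul_nonneg h2 h4) h5,
      mul_nonneg (mul_nonneg h2 h4) h4,
      mul_nonneg (mul_nonneg h2 h3) h7,
      mul_nonneg (mul_nonneg h2 h3) h6,
      mul_nonneg (mul_nonneg h2 h3) h5,
      mul_nonneg (mul_nonneg h2 h3) h4,
      mul_nonneg (mul_nonneg h2 h3) h3,
      mul_nonneg (mul_nonneg h2 h2) h7,
      mul_nonneg (mul_nonneg h2 h2) h6,
      mul_nonneg (mul_nonneg h2 h2) h5,
      mul_nonneg (mul_nonneg h2 h2) h4,
      mul_nonneg (mul_nonneg h2 h2) h3,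
      mul_nonneg (mul_nonneg h1 h5) h7,
      mul_nonneg (mul_nonneg h1 h5) h6,
      mul_nonneg (mul_nonneg h1 h5) h5,
      mul_nonneg (mul_nonneg h1 h4) h7,
      mul_nonneg (mul_nonneg h1 h4) h6,
      mul_nonneg (mul_nonneg h1 h4) h5,
      mul_nonneg (mul_nonneg h1 h4) h4,
      mul_nonneg (mul_nonneg h1 h3) h7,
      mul_nonneg (mul_nonneg h1 h3) h6,
      mul_nonneg (mul_nonneg h1 h3) h5,
      mul_nonneg (mul_nonneg h1 h3) h4,
      mul_nonneg (mul_nonneg h1 h3) h3,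
      mul_nonneg (mul_nonneg h1 h2) h7,
      mul_nonneg (mul_nonneg h1 h2) h6,
      mul_nonneg (mul_nonneg h1 h2) h5,
      mul_nonneg (mul_nonneg h1 h2) h4,
      mul_nonneg (mul_nonneg h1 h2) h3,
      mul_nonneg (mul_nonneg h1 h2) h2,
      mul_nonneg (mul_nonneg h1 h1) h5,
      mul_nonneg (mul_nonneg h1 h1) h4,
      mul_nonneg (mul_nonneg h1 h1) h3,
      mul_nonneg (mul_nonneg h1 h1) h2]
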